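/- Lagrange's method of varying constants (exact form): let Q, R : ℝ × ℝ^{2n} → ℝ be C² and let Φ : ℝ × ℝ^{2n} → ℝ^{2n} be a C¹ map such that ∂Φ/∂t(t, a) = J ∇_z Q(t, Φ(t, a)) for all (t, a) and such that for every (t, a) the spatial Jacobian D_aΦ(t, a) is an invertible symplectic matrix. Let a : I → ℝ^{2n} be a C¹ curve on an interval I. Then t ↦ Φ(t, a(t)) is a solution of Hamilton's equations for the Hamiltonian Q + R if and only if a is a solution of Hamilton's equations for the pulled-back time-dependent Hamiltonian K(t, a) = R(t, Φ(t, a)), i.e. a'(t) = J ∇_a K(t, a(t)) for all t ∈ I. -/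

import Mathlib

open Matrix

/-- The standard `2n × 2n` real symplectic matrix `J = [[0, Iₙ], [−Iₙ, 0]]`,
with the indexing set `Fin n ⊕ Fin n` for `{1, …, 2n}`. -/
def symplecticJ (n : ℕ) : Matrix (Fin n ⊕ Fin n) (Fin n ⊕ Fin n) ℝ :=
  Matrix.fromBlocks 0 1 (-1) 0

/-- The spatial Jacobian matrix `D_aΦ(t, a)` of a time-dependent map
`Φ : ℝ → ℝ²ⁿ → ℝ²ⁿ`: its `(i, j)` entry is `∂Φ_i/∂a_j (t, a)`. -/
noncomputable def spatialJacobian (n : ℕ)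
    (Φ : ℝ → ((Fin n ⊕ Fin n) → ℝ) → (Fin n ⊕ Fin n) → ℝ)
    (t : ℝ) (a : (Fin n ⊕ Fin n) → ℝ) : Matrix (Fin n ⊕ Fin n) (Fin n ⊕ Fin n) ℝ :=
  Matrix.of fun i j => fderiv ℝ (fun b => Φ t b i) a (Pi.single j 1)

/-- A curve `z` is a solution on the interval `I` of Hamilton's equations for a
time-dependent Hamiltonian `H : ℝ × ℝ²ⁿ → ℝ` if `z'(t) = J ∇_z H(t, z(t))` for
all `t ∈ I`, written componentwise:
`z_i'(t) = ∑ j, J i j · ∂H/∂z_j (t, z(t))`. -/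
def IsHamiltonSolutionOn (n : ℕ)
    (H : ℝ × ((Fin n ⊕ Fin n) → ℝ) → ℝ)
    (z : ℝ → (Fin n ⊕ Fin n) → ℝ) (I : Set ℝ) : Prop :=
  ∀ t ∈ I, ∀ i : Fin n ⊕ Fin n,
    HasDerivWithinAt (fun s => z s i)
      (∑ j : Fin n ⊕ Fin n, symplecticJ n i j *
        fderiv ℝ (fun w => H (t, w)) (z t) (Pi.single j 1)) I t

lemma hasDerivWithinAt_singleton' {F : Type*} [NormedAddCommGroup F] [NormedSpace ℝ F]
    (f : ℝ → F) (x : ℝ) (c : F) : HasDerivWithinAt f c {x} x := by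
  simp only [HasDerivWithinAt, HasDerivAtFilter, nhdsWithin_singleton,
    hasFDerivAtFilter_iff_isLittleO, Filter.prod_pure_pure, Asymptotics.isLittleO_pure, sub_self, map_zero]

lemma pi_sum_single {ι : Type*} [Fintype ι] [DecidableEq ι] (x : ι → ℝ) :
    ∑ i, x i • (Pi.single i 1 : ι → ℝ) = x := by
  ext j
  simp [Pi.single_apply, Finset.sum_apply]

lemma clm_apply_eq_sum {ι : Type*} [Fintype ι] [DecidableEq ι]
    (L : (ι → ℝ) →L[ℝ] ℝ) (x : ι → ℝ) :
    L x = ∑ i, x i * L (Pi.single i 1) := by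
  conv_lhs => rw [← pi_sum_single x]
  rw [map_sum]
  simp [smul_eq_mul]

lemma symplecticJ_mul_self (n : ℕ) : symplecticJ n * symplecticJ n = -1 := by
  have h : (-1 : Matrix (Fin n ⊕ Fin n) (Fin n ⊕ Fin n) ℝ) =
      Matrix.fromBlocks (-1) 0 0 (-1) := by
    ext (i | i) (j | j) <;>
      simp [Matrix.one_apply, Matrix.fromBlocks_apply₁₁, Matrix.fromBlocks_apply₁₂,
        Matrix.fromBlocks_apply₂₁, Matrix.fromBlocks_apply₂₂]
  rw [h, symplecticJ, Matrix.fromBlocks_multiply]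
  simp

lemma symplectic_mulVec_iff {n : ℕ} {M : Matrix (Fin n ⊕ Fin n) (Fin n ⊕ Fin n) ℝ}
    (hdet : IsUnit M.det) (hs : Mᵀ * symplecticJ n * M = symplecticJ n)
    (v g : (Fin n ⊕ Fin n) → ℝ) :
    M.mulVec v = (symplecticJ n).mulVec g ↔ v = (symplecticJ n * Mᵀ).mulVec g := by
  set J := symplecticJ n with hJ
  have hJJ : J * J = -1 := symplecticJ_mul_self n
  have hinv : (J * Mᵀ * J) * M = -1 := by
    rw [mul_assoc J Mᵀ J, mul_assoc J (Mᵀ * J) M, hs, hJJ]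
  have hNM : (-(J * Mᵀ * J)) * M = 1 := by rw [neg_mul, hinv, neg_neg]
  have hMN : M * (-(J * Mᵀ * J)) = 1 := by
    rw [← Matrix.inv_eq_left_inv hNM]; exact Matrix.mul_nonsing_inv M hdet
  have hNJ : (-(J * Mᵀ * J)) * J = J * Mᵀ := by
    rw [neg_mul, mul_assoc (J * Mᵀ) J J, hJJ, mul_neg_one, neg_neg]
  have hMJM : M * (J * Mᵀ) = J := by
    have h1 : M * (J * Mᵀ * J) = -1 := by
      have h := hMN
      rw [mul_neg, neg_eq_iff_eq_neg] at h
      exact h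
    have h3 : M * (J * Mᵀ) * (J * J) = -J := by
      rw [← mul_assoc, mul_assoc M (J * Mᵀ) J, h1]
      simp
    rw [hJJ, mul_neg_one] at h3
    exact neg_inj.mp h3
  constructor
  · intro h
    have h2 := congrArg (fun w => (-(J * Mᵀ * J)).mulVec w) h
    simp only [Matrix.mulVec_mulVec] at h2
    rw [hNM, hNJ, Matrix.one_mulVec] at h2
    exact h2
  · intro h
    rw [h, Matrix.mulVec_mulVec, hMJM]

/-- **Lagrange's method of varying constants (exact form).** Let
`Q, R : ℝ × ℝ²ⁿ → ℝ` be `C²` and let `Φ : ℝ × ℝ²ⁿ → ℝ²ⁿ` be a `C¹` map such that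
`∂Φ/∂t(t, a) = J ∇_z Q(t, Φ(t, a))` for all `(t, a)` and such that for every
`(t, a)` the spatial Jacobian `D_aΦ(t, a)` is an invertible symplectic matrix.
Let `a : I → ℝ²ⁿ` be a `C¹` curve on an interval `I`.  Then `t ↦ Φ(t, a(t))` is a
solution of Hamilton's equations for the Hamiltonian `Q + R` if and only if `a`
is a solution of Hamilton's equations for the pulled-back time-dependent
Hamiltonian `K(t, b) = R(t, Φ(t, b))`. -/
theorem lagrange_variation_of_constants (n : ℕ)
    (Q R : ℝ × ((Fin n ⊕ Fin n) → ℝ) → ℝ)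
    (hQ : ContDiff ℝ 2 Q) (hR : ContDiff ℝ 2 R)
    (Φ : ℝ → ((Fin n ⊕ Fin n) → ℝ) → (Fin n ⊕ Fin n) → ℝ)
    (hΦ : ContDiff ℝ 1 (fun p : ℝ × ((Fin n ⊕ Fin n) → ℝ) => Φ p.1 p.2))
    (hflow : ∀ (t : ℝ) (a : (Fin n ⊕ Fin n) → ℝ) (i : Fin n ⊕ Fin n),
      HasDerivAt (fun s => Φ s a i)
        (∑ j : Fin n ⊕ Fin n, symplecticJ n i j *
          fderiv ℝ (fun w => Q (t, w)) (Φ t a) (Pi.single j 1)) t)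
    (hjac : ∀ (t : ℝ) (a : (Fin n ⊕ Fin n) → ℝ),
      IsUnit (spatialJacobian n Φ t a).det ∧
      (spatialJacobian n Φ t a)ᵀ * symplecticJ n * spatialJacobian n Φ t a
        = symplecticJ n)
    (I : Set ℝ) (hI : I.OrdConnected)
    (a : ℝ → (Fin n ⊕ Fin n) → ℝ) (ha : ContDiffOn ℝ 1 a I) :
    IsHamiltonSolutionOn n (fun p => Q p + R p) (fun t => Φ t (a t)) I ↔
      IsHamiltonSolutionOn n (fun p : ℝ × ((Fin n ⊕ Fin n) → ℝ) => R (p.1, Φ p.1 p.2))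
        a I := by
  classical
  have hΦd : Differentiable ℝ (fun p : ℝ × ((Fin n ⊕ Fin n) → ℝ) => Φ p.1 p.2) :=
    hΦ.differentiable one_ne_zero
  have hQd : Differentiable ℝ Q := hQ.differentiable two_ne_zero
  have hRd : Differentiable ℝ R := hR.differentiable two_ne_zero
  by_cases hsing : I.Subsingleton
  · constructor <;> intro _ t ht i
    · have hIt : I = {t} := hsing.eq_singleton_of_mem ht
      rw [hIt]
      exact hasDerivWithinAt_singleton' _ _ _
    · have hIt : I = {t} := hsing.eq_singleton_of_mem ht
      rw [hIt]
      exact hasDerivWithinAt_singleton' _ _ _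
  have hUD : ∀ t ∈ I, UniqueDiffWithinAt ℝ I t := by
    rw [Set.not_subsingleton_iff] at hsing
    obtain ⟨x, hx, y, hy, hxy⟩ := hsing
    have hconv : Convex ℝ I := convex_iff_ordConnected.mpr hI
    have hne : (interior I).Nonempty := by
      rcases hxy.lt_or_gt with h | h
      · obtain ⟨m, hm⟩ := Set.nonempty_Ioo.2 h
        exact ⟨m, (isOpen_Ioo.subset_interior_iff.mpr
          (fun w hw => hI.out hx hy ⟨hw.1.le, hw.2.le⟩)) hm⟩
      · obtain ⟨m, hm⟩ := Set.nonempty_Ioo.2 h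
        exact ⟨m, (isOpen_Ioo.subset_interior_iff.mpr
          (fun w hw => hI.out hy hx ⟨hw.1.le, hw.2.le⟩)) hm⟩
    exact fun t ht => uniqueDiffWithinAt_convex hconv hne (subset_closure ht)
  have key : ∀ t ∈ I,
      ((∀ i, HasDerivWithinAt (fun s => Φ s (a s) i)
         (∑ j : Fin n ⊕ Fin n, symplecticJ n i j *
           fderiv ℝ (fun w => Q (t, w) + R (t, w)) (Φ t (a t)) (Pi.single j 1)) I t)
      ↔ (∀ i, HasDerivWithinAt (fun s => a s i)
         (∑ j : Fin n ⊕ Fin n, symplecticJ n i j *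
           fderiv ℝ (fun w => R (t, Φ t w)) (a t) (Pi.single j 1)) I t)) := by
    intro t ht
    have hUDt := hUD t ht
    set M := spatialJacobian n Φ t (a t) with hMdef
    set q : (Fin n ⊕ Fin n) → ℝ :=
      fun j => fderiv ℝ (fun w => Q (t, w)) (Φ t (a t)) (Pi.single j 1) with hqdef
    set g : (Fin n ⊕ Fin n) → ℝ :=
      fun j => fderiv ℝ (fun w => R (t, w)) (Φ t (a t)) (Pi.single j 1) with hgdef
    have hadiff : DifferentiableWithinAt ℝ a I t := (ha.differentiableOn one_ne_zero) t ht
    set v : (Fin n ⊕ Fin n) → ℝ := fderivWithin ℝ a I t 1 with hvdef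
    have hva : HasDerivWithinAt a v I t := hadiff.hasFDerivWithinAt.hasDerivWithinAt
    have hvai : ∀ i, HasDerivWithinAt (fun s => a s i) (v i) I t :=
      fun i => hasDerivWithinAt_pi.1 hva i
    set DF := fderiv ℝ (fun p : ℝ × ((Fin n ⊕ Fin n) → ℝ) => Φ p.1 p.2) (t, a t) with hDFdef
    have hDF : HasFDerivAt (fun p : ℝ × ((Fin n ⊕ Fin n) → ℝ) => Φ p.1 p.2) DF (t, a t) :=
      (hΦd (t, a t)).hasFDerivAt
    have hc : HasDerivWithinAt (fun s : ℝ => ((s, a s) : ℝ × ((Fin n ⊕ Fin n) → ℝ)))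
        ((1 : ℝ), v) I t := HasDerivWithinAt.prodMk (hasDerivWithinAt_id t I) hva
    have hcomp : HasDerivWithinAt (fun s => Φ s (a s)) (DF (1, v)) I t := by
      have h := hDF.comp_hasDerivWithinAt t hc
      simpa [Function.comp_def] using h
    have hcomp_i : ∀ i, HasDerivWithinAt (fun s => Φ s (a s) i) (DF (1, v) i) I t :=
      fun i => hasDerivWithinAt_pi.1 hcomp i
    have htime : HasDerivAt (fun s => Φ s (a t)) (DF (1, (0 : (Fin n ⊕ Fin n) → ℝ))) t := by
      have hcurve : HasDerivAt (fun s : ℝ => ((s, a t) : ℝ × ((Fin n ⊕ Fin n) → ℝ)))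
          ((1 : ℝ), (0 : (Fin n ⊕ Fin n) → ℝ)) t :=
        HasDerivAt.prodMk (hasDerivAt_id t) (hasDerivAt_const t (a t))
      simpa [Function.comp_def] using hDF.comp_hasDerivAt t hcurve
    have hflow' : HasDerivAt (fun s => Φ s (a t)) ((symplecticJ n).mulVec q) t := by
      refine hasDerivAt_pi.2 fun i => ?_
      have h := hflow t (a t) i
      have he : (symplecticJ n).mulVec q i = ∑ j : Fin n ⊕ Fin n, symplecticJ n i j * q j := by
        simp [Matrix.mulVec, dotProduct]
      rw [he]
      exact h
    have hw0 : DF (1, (0 : (Fin n ⊕ Fin n) → ℝ)) = (symplecticJ n).mulVec q :=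
      htime.unique hflow'
    have hproj : HasFDerivAt (fun b : (Fin n ⊕ Fin n) → ℝ =>
          ((t, b) : ℝ × ((Fin n ⊕ Fin n) → ℝ)))
        ((0 : ((Fin n ⊕ Fin n) → ℝ) →L[ℝ] ℝ).prod
          (ContinuousLinearMap.id ℝ ((Fin n ⊕ Fin n) → ℝ))) (a t) :=
      HasFDerivAt.prodMk (hasFDerivAt_const t (a t)) (hasFDerivAt_id (a t))
    have hspace : HasFDerivAt (fun b => Φ t b)
        (DF.comp ((0 : ((Fin n ⊕ Fin n) → ℝ) →L[ℝ] ℝ).prod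
          (ContinuousLinearMap.id ℝ ((Fin n ⊕ Fin n) → ℝ)))) (a t) := by
      simpa [Function.comp] using hDF.comp (a t) hproj
    have hspace_i : ∀ i, HasFDerivAt (fun b => Φ t b i)
        ((ContinuousLinearMap.proj i).comp
          (DF.comp ((0 : ((Fin n ⊕ Fin n) → ℝ) →L[ℝ] ℝ).prod
            (ContinuousLinearMap.id ℝ ((Fin n ⊕ Fin n) → ℝ))))) (a t) := by
      intro i
      have h := ((ContinuousLinearMap.proj i :
        ((Fin n ⊕ Fin n) → ℝ) →L[ℝ] ℝ)).hasFDerivAt.comp (a t) hspace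
      simpa [Function.comp_def] using h
    have hMij : ∀ i j, M i j = DF ((0 : ℝ), Pi.single j 1) i := by
      intro i j
      have hfd := (hspace_i i).fderiv
      rw [hMdef]
      show fderiv ℝ (fun b => Φ t b i) (a t) (Pi.single j 1) = _
      rw [hfd]
      simp
    have hsum2 : (∑ j : Fin n ⊕ Fin n, v j •
        (((0 : ℝ), Pi.single j 1) : ℝ × ((Fin n ⊕ Fin n) → ℝ))) = ((0 : ℝ), v) := by
      refine Prod.ext ?_ ?_
      · rw [Prod.fst_sum]; simp
      · rw [Prod.snd_sum]; simpa using pi_sum_single v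
    have hsum : ((1 : ℝ), v) = ((1 : ℝ), (0 : (Fin n ⊕ Fin n) → ℝ))
        + ∑ j : Fin n ⊕ Fin n, v j •
          (((0 : ℝ), Pi.single j 1) : ℝ × ((Fin n ⊕ Fin n) → ℝ)) := by
      rw [hsum2, Prod.mk_add_mk]
      simp
    have hDFv : DF (1, v) = (symplecticJ n).mulVec q + M.mulVec v := by
      have e1 : DF (1, v) = DF (1, (0 : (Fin n ⊕ Fin n) → ℝ))
          + ∑ j : Fin n ⊕ Fin n, v j • DF ((0 : ℝ), Pi.single j 1) := by
        conv_lhs => rw [hsum]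
        rw [map_add, map_sum]
        congr 1
        refine Finset.sum_congr rfl fun j _ => ?_
        exact DF.map_smul _ _
      rw [e1, hw0]
      funext i
      simp only [Pi.add_apply, Finset.sum_apply, Pi.smul_apply, smul_eq_mul]
      congr 1
      have : M.mulVec v i = ∑ j : Fin n ⊕ Fin n, M i j * v j := by
        simp [Matrix.mulVec, dotProduct]
      rw [this]
      refine Finset.sum_congr rfl fun j _ => ?_
      rw [hMij i j, mul_comm]
    have hderiv_z : ∀ i, HasDerivWithinAt (fun s => Φ s (a s) i)
        (((symplecticJ n).mulVec q + M.mulVec v) i) I t := by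
      intro i
      have h := hcomp_i i
      rwa [hDFv] at h
    have hQt : Differentiable ℝ (fun w : (Fin n ⊕ Fin n) → ℝ => Q (t, w)) :=
      hQd.comp (Differentiable.prodMk (differentiable_const t) differentiable_id)
    have hRt : Differentiable ℝ (fun w : (Fin n ⊕ Fin n) → ℝ => R (t, w)) :=
      hRd.comp (Differentiable.prodMk (differentiable_const t) differentiable_id)
    have hLval : ∀ i, (∑ j : Fin n ⊕ Fin n, symplecticJ n i j *
        fderiv ℝ (fun w => Q (t, w) + R (t, w)) (Φ t (a t)) (Pi.single j 1))
        = ((symplecticJ n).mulVec q + (symplecticJ n).mulVec g) i := by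
      intro i
      have hadd : ∀ j : Fin n ⊕ Fin n,
          fderiv ℝ (fun w => Q (t, w) + R (t, w)) (Φ t (a t)) (Pi.single j 1)
          = q j + g j := by
        intro j
        rw [fderiv_fun_add (hQt _) (hRt _)]
        simp [hqdef, hgdef]
      simp only [hadd]
      simp [Matrix.mulVec, dotProduct, mul_add, Finset.sum_add_distrib]
    have hKval : ∀ j, fderiv ℝ (fun w => R (t, Φ t w)) (a t) (Pi.single j 1)
        = Mᵀ.mulVec g j := by
      intro j
      have hDRt : HasFDerivAt (fun w : (Fin n ⊕ Fin n) → ℝ => R (t, w))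
          (fderiv ℝ (fun w : (Fin n ⊕ Fin n) → ℝ => R (t, w)) (Φ t (a t))) (Φ t (a t)) :=
        (hRt _).hasFDerivAt
      have hcompR : HasFDerivAt (fun w => R (t, Φ t w))
          ((fderiv ℝ (fun w : (Fin n ⊕ Fin n) → ℝ => R (t, w)) (Φ t (a t))).comp
            (DF.comp ((0 : ((Fin n ⊕ Fin n) → ℝ) →L[ℝ] ℝ).prod
              (ContinuousLinearMap.id ℝ ((Fin n ⊕ Fin n) → ℝ))))) (a t) := by
        simpa [Function.comp_def] using hDRt.comp (a t) hspace
      rw [hcompR.fderiv]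
      simp only [ContinuousLinearMap.comp_apply, ContinuousLinearMap.prod_apply,
        ContinuousLinearMap.zero_apply, ContinuousLinearMap.id_apply]
      rw [clm_apply_eq_sum]
      have : Mᵀ.mulVec g j = ∑ i : Fin n ⊕ Fin n, M i j * g i := by
        simp [Matrix.mulVec, dotProduct, Matrix.transpose_apply]
      rw [this]
      refine Finset.sum_congr rfl fun i _ => ?_
      rw [hMij i j]
    have hRHSval : ∀ i, (∑ j : Fin n ⊕ Fin n, symplecticJ n i j *
        fderiv ℝ (fun w => R (t, Φ t w)) (a t) (Pi.single j 1))
        = ((symplecticJ n * Mᵀ).mulVec g) i := by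
      intro i
      simp only [hKval]
      rw [← Matrix.mulVec_mulVec]
      simp [Matrix.mulVec, dotProduct]
    obtain ⟨hdet, hsympl⟩ := hjac t (a t)
    have hiff : M.mulVec v = (symplecticJ n).mulVec g
        ↔ v = (symplecticJ n * Mᵀ).mulVec g := symplectic_mulVec_iff hdet hsympl v g
    constructor
    · intro hL
      have heq : M.mulVec v = (symplecticJ n).mulVec g := by
        have hvec : (symplecticJ n).mulVec q + M.mulVec v
            = (symplecticJ n).mulVec q + (symplecticJ n).mulVec g := by
          funext i
          have e1 := (hderiv_z i).derivWithin hUDt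
          have e2 := (hL i).derivWithin hUDt
          rw [← e1, ← hLval i, ← e2]
        exact add_left_cancel hvec
      have hv : v = (symplecticJ n * Mᵀ).mulVec g := hiff.mp heq
      intro i
      have h2 := hvai i
      rw [hv] at h2
      rwa [hRHSval i]
    · intro hK
      have hveq : v = (symplecticJ n * Mᵀ).mulVec g := by
        funext i
        have e1 := (hvai i).derivWithin hUDt
        have e2 := (hK i).derivWithin hUDt
        rw [← e1, ← hRHSval i, ← e2]
      have hMv : M.mulVec v = (symplecticJ n).mulVec g := hiff.mpr hveq
      intro i
      have h2 := hderiv_z i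
      rw [hLval i]
      have hval : ((symplecticJ n).mulVec q + M.mulVec v) i
          = ((symplecticJ n).mulVec q + (symplecticJ n).mulVec g) i := by rw [hMv]
      rw [← hval]
      exact h2
  constructor
  · intro h t ht i
    exact (key t ht).1 (fun i' => h t ht i') i
  · intro h t ht i
    exact (key t ht).2 (fun i' => h t ht i') i
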